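/- Let M be an n×n symmetric matrix in the k-PSD closure whose smallest eigenvalue is -λ₁ < 0. Then dist_F(M, S⁺ₙ) ≤ sqrt(n - k) · λ₁. -/

import Mathlib

open Matrix BigOperators Finset

noncomputable def frob {n : ℕ} (A : Matrix (Fin n) (Fin n) ℝ) : ℝ :=
  Real.sqrt (∑ i, ∑ j, (A i j)^2)

noncomputable def distPSD {n : ℕ} (M : Matrix (Fin n) (Fin n) ℝ) : ℝ :=
  sInf {d : ℝ | ∃ N : Matrix (Fin n) (Fin n) ℝ, N.PosSemidef ∧ d = frob (M - N)}

def kPSD {n : ℕ} (k : ℕ) (M : Matrix (Fin n) (Fin n) ℝ) : Prop :=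
  ∀ J : Finset (Fin n), J.card = k →
    (M.submatrix (fun i : {i // i ∈ J} => (i : Fin n))
      (fun i : {i // i ∈ J} => (i : Fin n))).PosSemidef

def kSparse {n : ℕ} (k : ℕ) (x : Fin n → ℝ) : Prop :=
  (Finset.univ.filter (fun i => x i ≠ 0)).card ≤ k

lemma quad_conj {n : ℕ} (A U : Matrix (Fin n) (Fin n) ℝ) (c : Fin n → ℝ) :
    (U *ᵥ c) ⬝ᵥ (A *ᵥ (U *ᵥ c)) = c ⬝ᵥ ((Uᵀ * A * U) *ᵥ c) := by
  rw [← mulVec_mulVec, ← mulVec_mulVec, ← vecMul_transpose, dotProduct_mulVec,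
    vecMul_vecMul, ← dotProduct_mulVec, mulVec_mulVec]

lemma card_neg_le {n k : ℕ} (hkn : k ≤ n) (M : Matrix (Fin n) (Fin n) ℝ)
    (hM : M.IsHermitian) (h : kPSD k M) :
    (Finset.univ.filter (fun i => hM.eigenvalues i < 0)).card + k ≤ n := by
  by_contra hcon
  push_neg at hcon
  set S := Finset.univ.filter (fun i => hM.eigenvalues i < 0) with hS
  obtain ⟨J, _, hJcard⟩ := Finset.exists_subset_card_eq (s := (Finset.univ : Finset (Fin n)))
    (n := k) (by simpa using hkn)
  set U := (hM.eigenvectorUnitary : Matrix (Fin n) (Fin n) ℝ) with hUdef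
  set v : {i // i ∈ S} ⊕ {j // j ∈ J} → (Fin n → ℝ) :=
    Sum.elim (fun i => Uᵀ (i : Fin n)) (fun j => Pi.single (j : Fin n) (1:ℝ)) with hv
  have hnli : ¬ LinearIndependent ℝ v := by
    intro hli
    have := hli.fintype_card_le_finrank
    simp [Module.finrank_pi] at this
    omega
  rw [Fintype.not_linearIndependent_iff] at hnli
  obtain ⟨g, hg, i₀, hi₀⟩ := hnli
  rw [Fintype.sum_sum_type] at hg
  -- evaluate the relation at each coordinate
  have hgr : ∀ r, (∑ i : {i // i ∈ S}, g (Sum.inl i) * U r (i : Fin n))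
      + (∑ j : {j // j ∈ J}, g (Sum.inr j) * (Pi.single (j : Fin n) (1:ℝ) : Fin n → ℝ) r) = 0 := by
    intro r
    have := congrFun hg r
    simpa [hv, Finset.sum_apply, Pi.smul_apply, smul_eq_mul, transpose_apply,
      mul_comm] using this
  -- the coefficient vector
  set a : Fin n → ℝ := fun i => if hi : i ∈ S then g (Sum.inl ⟨i, hi⟩) else 0 with ha
  set x : Fin n → ℝ := U *ᵥ a with hxdef
  have hx : ∀ r, x r = ∑ i : {i // i ∈ S}, g (Sum.inl i) * U r (i : Fin n) := by
    intro r
    show (U *ᵥ a) r = _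
    have h1 : (U *ᵥ a) r = ∑ i ∈ S, U r i * a i := by
      rw [mulVec, dotProduct]
      refine (Finset.sum_subset (Finset.subset_univ S) ?_).symm
      intro i _ hiS
      simp [ha, dif_neg hiS]
    rw [h1, ← Finset.sum_attach S (fun i => U r i * a i)]
    refine Finset.sum_congr rfl (fun i _ => ?_)
    simp only [ha, dif_pos i.2, Subtype.coe_eta, mul_comm]
  have hoffJ : ∀ r, r ∉ J → x r = 0 := by
    intro r hr
    have hgrr := hgr r
    rw [← hx r] at hgrr
    have hz : ∑ j : {j // j ∈ J}, g (Sum.inr j) * (Pi.single (j : Fin n) (1:ℝ) : Fin n → ℝ) r = 0 := by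
      apply Finset.sum_eq_zero
      intro j _
      rw [Pi.single_eq_of_ne (fun hc => hr (by rw [hc]; exact j.2))]
      ring
    rw [hz, add_zero] at hgrr
    exact hgrr
  by_cases hA : ∀ i : {i // i ∈ S}, g (Sum.inl i) = 0
  · have hbz : ∀ j : {j // j ∈ J}, g (Sum.inr j) = 0 := by
      intro j
      have hgrj := hgr (j : Fin n)
      have h1 : ∑ i : {i // i ∈ S}, g (Sum.inl i) * U (j : Fin n) (i : Fin n) = 0 := by
        apply Finset.sum_eq_zero; intro i _; rw [hA i]; ring
      have h2 : ∑ j' : {j // j ∈ J}, g (Sum.inr j') * (Pi.single (j' : Fin n) (1:ℝ) : Fin n → ℝ) (j : Fin n)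
          = g (Sum.inr j) := by
        rw [Finset.sum_eq_single j]
        · simp
        · intro j' _ hne
          rw [Pi.single_eq_of_ne (fun hc => hne (Subtype.ext hc.symm))]
          ring
        · intro hj; exact absurd (Finset.mem_univ j) hj
      rw [h1, h2, zero_add] at hgrj
      exact hgrj
    cases i₀ with
    | inl i => exact hi₀ (hA i)
    | inr j => exact hi₀ (hbz j)
  · push_neg at hA
    obtain ⟨i₁, hi₁⟩ := hA
    have hq : x ⬝ᵥ (M *ᵥ x) < 0 := by
      rw [hxdef, quad_conj]
      have hdiag : Uᵀ * M * U = diagonal hM.eigenvalues := by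
        have := hM.conjStarAlgAut_star_eigenvectorUnitary
        simpa [star_eq_conjTranspose, conjTranspose_eq_transpose_of_trivial] using this
      rw [hdiag]
      have hexp : a ⬝ᵥ (diagonal hM.eigenvalues *ᵥ a) = ∑ i, hM.eigenvalues i * a i ^ 2 := by
        simp only [dotProduct, mulVec_diagonal]; congr 1; ext i; ring
      rw [hexp]
      have hlt : ∑ i, hM.eigenvalues i * a i ^ 2 < ∑ _i : Fin n, (0:ℝ) := by
        apply Finset.sum_lt_sum
        · intro i _
          by_cases hiS : i ∈ S
          · have hne : hM.eigenvalues i < 0 := (Finset.mem_filter.mp hiS).2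
            nlinarith [sq_nonneg (a i)]
          · simp [ha, dif_neg hiS]
        · refine ⟨(i₁ : Fin n), Finset.mem_univ _, ?_⟩
          have hne : hM.eigenvalues (i₁ : Fin n) < 0 := (Finset.mem_filter.mp i₁.2).2
          have hai : a (i₁ : Fin n) = g (Sum.inl i₁) := by
            simp [ha, dif_pos i₁.2]
          have : (0:ℝ) < a (i₁ : Fin n) ^ 2 := by
            rw [hai]; positivity
          nlinarith
      simpa using hlt
    have hpsd := h J hJcard
    have hq2 : 0 ≤ x ⬝ᵥ (M *ᵥ x) := by
      have h0 := hpsd.dotProduct_mulVec_nonneg (fun i : {i // i ∈ J} => x (i : Fin n))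
      have hinner : ∀ r, (M *ᵥ x) r = ∑ s ∈ J.attach, M r (s : Fin n) * x (s : Fin n) := by
        intro r
        rw [mulVec, dotProduct]
        have h1 : ∑ i : Fin n, M r i * x i = ∑ i ∈ J, M r i * x i :=
          (Finset.sum_subset (Finset.subset_univ J)
            (fun s _ hs => by rw [hoffJ s hs]; ring)).symm
        rw [h1, ← Finset.sum_attach J (fun s => M r s * x s)]
      have hexp : x ⬝ᵥ (M *ᵥ x)
          = ∑ r ∈ J.attach, x (r : Fin n) * ∑ s ∈ J.attach, M (r : Fin n) (s : Fin n) * x (s : Fin n) := by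
        rw [dotProduct]
        have h1 : ∑ i : Fin n, x i * (M *ᵥ x) i = ∑ i ∈ J, x i * (M *ᵥ x) i :=
          (Finset.sum_subset (Finset.subset_univ J)
            (fun r _ hr => by rw [hoffJ r hr]; ring)).symm
        rw [h1, ← Finset.sum_attach J (fun r => x r * (M *ᵥ x) r)]
        exact Finset.sum_congr rfl (fun r _ => by rw [hinner])
      rw [hexp]
      have h0' : (0:ℝ) ≤ ∑ r : {i // i ∈ J}, x (r : Fin n)
          * ∑ s : {i // i ∈ J}, M (r : Fin n) (s : Fin n) * x (s : Fin n) := by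
        simpa [dotProduct, mulVec, submatrix_apply, star_trivial] using h0
      exact h0'
    linarith

theorem frob_eq_trace {n : ℕ} (A : Matrix (Fin n) (Fin n) ℝ) :
    ∑ i, ∑ j, (A i j)^2 = trace (Aᵀ * A) := by
  simp [trace, mul_apply, sq, Matrix.diag]
  rw [Finset.sum_comm]

theorem trace_conj {n : ℕ} (U : Matrix (Fin n) (Fin n) ℝ) (hU : Uᵀ * U = 1) (d : Fin n → ℝ) :
    trace ((U * diagonal d * Uᵀ)ᵀ * (U * diagonal d * Uᵀ)) = ∑ i, d i ^ 2 := by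
  have h1 : (U * diagonal d * Uᵀ)ᵀ = U * diagonal d * Uᵀ := by
    simp [transpose_mul, Matrix.mul_assoc]
  rw [h1]
  have h2 : (U * diagonal d * Uᵀ) * (U * diagonal d * Uᵀ) = U * (diagonal d * diagonal d) * Uᵀ := by
    simp only [← Matrix.mul_assoc]
    rw [Matrix.mul_assoc (U * diagonal d) Uᵀ U, hU, Matrix.mul_one]
  rw [h2, trace_mul_cycle, ← Matrix.mul_assoc, hU, Matrix.one_mul, diagonal_mul_diagonal,
    trace_diagonal]
  simp [sq]

theorem stmt3_aux (n k : ℕ) (hk : 2 ≤ k) (hkn : k ≤ n)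
    (M : Matrix (Fin n) (Fin n) ℝ) (hM : M.IsHermitian)
    (hcard : (Finset.univ.filter (fun i => hM.eigenvalues i < 0)).card + k ≤ n)
    (lam : ℝ) (hlam : 0 < lam)
    (hmin : ∀ i, -lam ≤ hM.eigenvalues i) :
    distPSD M ≤ Real.sqrt ((n : ℝ) - k) * lam := by
  set U := (hM.eigenvectorUnitary : Matrix (Fin n) (Fin n) ℝ) with hUdef
  have hU1 : Uᵀ * U = 1 := by
    have := (Matrix.mem_unitaryGroup_iff').mp hM.eigenvectorUnitary.2
    exact this
  set dpos : Fin n → ℝ := fun i => max (hM.eigenvalues i) 0 with hdpos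
  set dneg : Fin n → ℝ := fun i => min (hM.eigenvalues i) 0 with hdneg
  set N : Matrix (Fin n) (Fin n) ℝ := U * diagonal dpos * Uᵀ with hN
  have hNpsd : N.PosSemidef := by
    have hd : Matrix.PosSemidef (diagonal dpos) :=
      Matrix.PosSemidef.diagonal (fun i => le_max_right _ _)
    exact hd.mul_mul_conjTranspose_same U
  have hMspec : M = U * diagonal hM.eigenvalues * Uᵀ := by
    have := hM.spectral_theorem
    simpa [star_eq_conjTranspose, conjTranspose_eq_transpose_of_trivial] using this
  have hMN : M - N = U * diagonal dneg * Uᵀ := by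
    have hd : diagonal hM.eigenvalues = diagonal dpos + diagonal dneg := by
      rw [diagonal_add]
      congr 1
      funext i
      have := max_add_min (hM.eigenvalues i) 0
      simpa [hdpos, hdneg] using this.symm
    rw [hMspec, hN, hd]
    noncomm_ring
  -- value of frob (M - N)
  have hfrob : frob (M - N) = Real.sqrt (∑ i, dneg i ^ 2) := by
    rw [frob, frob_eq_trace, hMN, trace_conj U hU1]
  -- sum bound
  have hsum : ∑ i, dneg i ^ 2 ≤ ((n:ℝ) - k) * lam ^ 2 := by
    set S := Finset.univ.filter (fun i => hM.eigenvalues i < 0) with hS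
    have h1 : ∑ i, dneg i ^ 2 = ∑ i ∈ S, dneg i ^ 2 := by
      refine (Finset.sum_subset (Finset.subset_univ S) ?_).symm
      intro i _ hiS
      have : 0 ≤ hM.eigenvalues i := by
        by_contra hc
        exact hiS (Finset.mem_filter.mpr ⟨Finset.mem_univ i, by linarith⟩)
      simp [hdneg, min_eq_right this]
    have h2 : ∀ i ∈ S, dneg i ^ 2 ≤ lam ^ 2 := by
      intro i hi
      have hneg : hM.eigenvalues i < 0 := (Finset.mem_filter.mp hi).2
      have hge := hmin i
      have : dneg i = hM.eigenvalues i := min_eq_left (le_of_lt hneg)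
      rw [this]
      nlinarith
    rw [h1]
    calc ∑ i ∈ S, dneg i ^ 2 ≤ ∑ _i ∈ S, lam ^ 2 := Finset.sum_le_sum h2
      _ = (S.card : ℝ) * lam ^ 2 := by rw [Finset.sum_const, nsmul_eq_mul]
      _ ≤ ((n:ℝ) - k) * lam ^ 2 := by
          have hle : (S.card : ℝ) ≤ (n : ℝ) - k := by
            have : (S.card : ℝ) + k ≤ n := by exact_mod_cast hcard
            linarith
          nlinarith
  -- conclude
  have hmem : frob (M - N) ∈ {d : ℝ | ∃ N' : Matrix (Fin n) (Fin n) ℝ,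
      N'.PosSemidef ∧ d = frob (M - N')} := ⟨N, hNpsd, rfl⟩
  have hbdd : BddBelow {d : ℝ | ∃ N' : Matrix (Fin n) (Fin n) ℝ,
      N'.PosSemidef ∧ d = frob (M - N')} := by
    refine ⟨0, fun d hd => ?_⟩
    obtain ⟨N', _, rfl⟩ := hd
    exact Real.sqrt_nonneg _
  have hle := csInf_le hbdd hmem
  refine hle.trans ?_
  rw [hfrob]
  have h3 : Real.sqrt (∑ i, dneg i ^ 2) ≤ Real.sqrt (((n:ℝ) - k) * lam ^ 2) :=
    Real.sqrt_le_sqrt hsum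
  refine h3.trans ?_
  rw [Real.sqrt_mul, Real.sqrt_sq hlam.le]
  · have : (k:ℝ) ≤ (n:ℝ) := by exact_mod_cast hkn
    linarith [Real.sqrt_nonneg ((n:ℝ) - k)]

theorem stmt3 (n k : ℕ) (hk : 2 ≤ k) (hkn : k ≤ n)
    (M : Matrix (Fin n) (Fin n) ℝ) (hM : M.IsHermitian) (h : kPSD k M)
    (lam : ℝ) (hlam : 0 < lam)
    (hmin : ∀ i, -lam ≤ hM.eigenvalues i) (hex : ∃ i, hM.eigenvalues i = -lam) :
    distPSD M ≤ Real.sqrt ((n : ℝ) - k) * lam :=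
  stmt3_aux n k hk hkn M hM (card_neg_le hkn M hM h) lam hlam hmin
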